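/- arXiv:1710.02782 — 6 statements merged into one kernel-verified Lean document; each statement's English description precedes it below -/
import Mathlib

section
/- For all integers i ≥ 2, W_{i+1} = W_i · (2 ⊕ W_{i-1}), where · denotes concatenation. -/
/-- The morphism `phi` on the alphabet `ℕ`: `phi (2i) = (2i)(2i+1)` and `phi (2i+1) = (2i+2)`. -/
def phi (a : ℕ) : List ℕ := if a % 2 = 0 then [a, a + 1] else [a + 1]

/-- The finite ZWW words: `W n = phi^n(0)`, so `W 0 = 0`, `W 1 = 01`, `W 2 = 012`, `W 3 = 01223`. -/
def W (n : ℕ) : List ℕ := (fun w => w.flatMap phi)^[n] [0]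

lemma phi_add_two (a : ℕ) : phi (a + 2) = (phi a).map (· + 2) := by
  unfold phi
  rcases Nat.even_or_odd a with h | h
  · simp [Nat.even_iff.mp h, Nat.add_mod]
  · simp [Nat.odd_iff.mp h, Nat.add_mod]

lemma flatMap_shift (w : List ℕ) :
    (w.map (· + 2)).flatMap phi = (w.flatMap phi).map (· + 2) := by
  induction w with
  | nil => rfl
  | cons a t ih => simp [List.flatMap_cons, phi_add_two, ih]

lemma W_succ (n : ℕ) : W (n + 1) = (W n).flatMap phi := by
  simp [W, Function.iterate_succ_apply']

/-- For all `i ≥ 2`, `W (i+1) = W i · (2 ⊕ W (i-1))`. -/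
theorem zww_recurrence : ∀ i : ℕ, 2 ≤ i →
    W (i + 1) = W i ++ (W (i - 1)).map (· + 2) := by
  intro i hi
  induction i, hi using Nat.le_induction with
  | base => decide
  | succ n hn ih =>
    have hn' : n - 1 + 1 = n := by omega
    simp only [Nat.add_sub_cancel]
    rw [W_succ (n + 1), ih, List.flatMap_append, flatMap_shift, ← W_succ n,
      ← W_succ (n - 1), hn', ih, List.append_assoc]
end

section
/- For all k ≥ 1: W_{2k-1} = (∏_{j=k}^{1} 2(k-j) ⊕ W_{2j-2}) · (2k-1) and W_{2k} = (∏_{j=k}^{1} 2(k-j) ⊕ W_{2j-1}) · (2k), where ∏_{j=k}^{1} denotes concatenation in the order j = k, k-1, …, 1, and the final factor is the single letter 2k-1 (respectively 2k). (For example, W_5 = W_4 · (2 ⊕ W_2) · (4 ⊕ W_0) · 5.) -/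
lemma phi_even (k : ℕ) : phi (2 * k) = [2 * k, 2 * k + 1] := by
  simp [phi, Nat.mul_mod_right]

lemma phi_odd (k : ℕ) : phi (2 * k + 1) = [2 * k + 2] := by
  simp [phi, Nat.mul_mod_right]

lemma phi_add (a t : ℕ) : phi (a + 2 * t) = (phi a).map (· + 2 * t) := by
  obtain ⟨m, hm⟩ | ⟨m, hm⟩ := Nat.even_or_odd a
  · rw [hm, show m + m + 2 * t = 2 * (m + t) by ring, show m + m = 2 * m by ring,
      phi_even, phi_even]
    simp
    omega
  · rw [hm, show 2 * m + 1 + 2 * t = 2 * (m + t) + 1 by ring, phi_odd, phi_odd]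
    simp
    ring

lemma flatMap_flatten' (l : List (List ℕ)) (f : ℕ → List ℕ) :
    l.flatten.flatMap f = (l.map (fun w => w.flatMap f)).flatten := by
  induction l with
  | nil => simp
  | cons a l ih => simp [ih]

lemma phi_shift (w : List ℕ) (t : ℕ) :
    (w.map (· + 2 * t)).flatMap phi = (w.flatMap phi).map (· + 2 * t) := by
  induction w with
  | nil => simp
  | cons a l ih =>
    simp [List.flatMap_cons, ih, phi_add]

lemma main : ∀ k : ℕ,
    W (2 * k + 1) =
      ((List.range (k + 1)).map (fun t => (W (2 * k - 2 * t)).map (· + 2 * t))).flatten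
        ++ [2 * k + 1] ∧
    W (2 * k + 2) =
      ((List.range (k + 1)).map (fun t => (W (2 * k + 1 - 2 * t)).map (· + 2 * t))).flatten
        ++ [2 * k + 2] := by
  intro k
  induction k with
  | zero =>
    constructor <;> simp [W, phi] <;> rfl
  | succ k ih =>
    obtain ⟨_, ih2⟩ := ih
    have h1 : W (2 * (k + 1) + 1) =
        ((List.range (k + 2)).map
          (fun t => (W (2 * (k + 1) - 2 * t)).map (· + 2 * t))).flatten
          ++ [2 * (k + 1) + 1] := by
      have : 2 * (k + 1) + 1 = (2 * k + 2) + 1 := by ring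
      rw [this, W_succ, ih2]
      rw [List.flatMap_append, flatMap_flatten', List.map_map]
      have hterm : ∀ t ∈ List.range (k + 1),
          ((W (2 * k + 1 - 2 * t)).map (· + 2 * t)).flatMap phi
            = (W (2 * (k + 1) - 2 * t)).map (· + 2 * t) := by
        intro t ht
        simp only [List.mem_range] at ht
        rw [phi_shift, ← W_succ, show 2 * k + 1 - 2 * t + 1 = 2 * (k + 1) - 2 * t by omega]
      rw [show ((2:ℕ) * k + 2) = 2 * (k + 1) by ring]
      simp only [List.flatMap_cons, List.flatMap_nil, phi_even, List.append_nil,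
        Function.comp_def]
      rw [List.map_congr_left hterm]
      rw [List.range_succ (n := k + 1), List.map_append, List.flatten_append]
      simp [W]
    refine ⟨h1, ?_⟩
    have : 2 * (k + 1) + 2 = (2 * (k + 1) + 1) + 1 := by ring
    rw [this, W_succ, h1]
    rw [List.flatMap_append, flatMap_flatten', List.map_map]
    have hterm : ∀ t ∈ List.range (k + 2),
        ((W (2 * (k + 1) - 2 * t)).map (· + 2 * t)).flatMap phi
          = (W (2 * (k + 1) + 1 - 2 * t)).map (· + 2 * t) := by
      intro t ht
      simp only [List.mem_range] at ht
      rw [phi_shift, ← W_succ, show 2 * (k + 1) - 2 * t + 1 = 2 * (k + 1) + 1 - 2 * t by omega]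
    simp only [List.flatMap_cons, List.flatMap_nil, phi_odd, List.append_nil,
      Function.comp_def]
    rw [List.map_congr_left hterm]

/-- For all `k ≥ 1`:
`W (2k-1) = (∏_{j=k}^{1} 2(k-j) ⊕ W (2j-2)) · (2k-1)` and
`W (2k) = (∏_{j=k}^{1} 2(k-j) ⊕ W (2j-1)) · (2k)`, the concatenations being taken
in the order `j = k, k-1, …, 1` (i.e. over `t = k - j = 0, 1, …, k-1`),
with the final factor beingered the single letter `2k-1` (resp. `2k`). -/
theorem zww_second_factorisation : ∀ k : ℕ, 1 ≤ k →
    W (2 * k - 1) =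
      ((List.range k).map (fun t => (W (2 * k - 2 * t - 2)).map (· + 2 * t))).flatten
        ++ [2 * k - 1] ∧
    W (2 * k) =
      ((List.range k).map (fun t => (W (2 * k - 2 * t - 1)).map (· + 2 * t))).flatten
        ++ [2 * k] := by
  rintro k hk
  obtain ⟨k, rfl⟩ : ∃ m, k = m + 1 := ⟨k - 1, by omega⟩
  obtain ⟨h1, h2⟩ := main k
  constructor
  · rw [show 2 * (k + 1) - 1 = 2 * k + 1 by omega, h1]
    congr 2
    apply List.map_congr_left
    intro t ht
    simp only [List.mem_range] at ht
    congr 2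
    omega
  · rw [show 2 * (k + 1) = 2 * k + 2 by omega, h2]
    congr 2
    apply List.map_congr_left
    intro t ht
    simp only [List.mem_range] at ht
    congr 2
    omega
end

section
/- For all i ≥ 0, the length of W_i equals the Fibonacci number f_{i+2}. -/
lemma flatMap_len (w : List ℕ) :
    (w.flatMap phi).length = w.length + w.countP (fun a => a % 2 = 0) := by
  induction w with
  | nil => simp
  | cons a t ih =>
    simp only [List.flatMap_cons, List.length_append, ih, List.length_cons,
      List.countP_cons, phi]
    by_cases h : a % 2 = 0 <;> simp [h] <;> omega

lemma flatMap_count (w : List ℕ) :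
    ((w.flatMap phi).countP (fun a => a % 2 = 0)) = w.length := by
  induction w with
  | nil => simp
  | cons a t ih =>
    simp only [List.flatMap_cons, List.countP_append, ih, List.length_cons, phi]
    by_cases h : a % 2 = 0
    · have h1 : ¬ (a + 1) % 2 = 0 := by omega
      simp [h, h1, List.countP_cons]
      omega
    · have h1 : (a + 1) % 2 = 0 := by omega
      simp [h, List.countP_cons, h1]
      omega

lemma key : ∀ i : ℕ, (W i).length = Nat.fib (i + 2) ∧
    (W i).countP (fun a => a % 2 = 0) = Nat.fib (i + 1) := by
  intro i
  induction i with
  | zero => simp [W]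
  | succ n ih =>
    have hW : W (n + 1) = (W n).flatMap phi := by
      simp [W, Function.iterate_succ_apply']
    rw [hW]
    constructor
    · rw [flatMap_len, ih.1, ih.2]
      have h2 : Nat.fib (n + 1 + 2) = Nat.fib (n + 1) + Nat.fib (n + 2) :=
        Nat.fib_add_two
      omega
    · rw [flatMap_count, ih.1]

/-- For all `i ≥ 0`, the length of `W i` is the Fibonacci number `f (i+2)`. -/
theorem zww_length : ∀ i : ℕ, (W i).length = Nat.fib (i + 2) := fun i => (key i).1
end

section
/- For all i, n ≥ 0, the number of occurrences of the letter n in the word W_i equals the binomial coefficient C(i - n + ⌊n/2⌋, ⌊n/2⌋), where the upper entry i - n + ⌊n/2⌋ is computed in the integers and C(x, y) is defined to be 0 whenever x < y or x < 0. -/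
lemma count_flatMap_phi (w : List ℕ) (n : ℕ) :
    (w.flatMap phi).count n =
      (if n % 2 = 0 then w.count n else 0) +
      (match n with | 0 => 0 | m+1 => w.count m) := by
  induction w with
  | nil => cases n <;> simp
  | cons a w ih =>
    rw [List.flatMap_cons, List.count_append, ih]
    have hphi : (phi a).count n =
        (if n % 2 = 0 ∧ a = n then 1 else 0) + (if a + 1 = n then 1 else 0) := by
      unfold phi
      by_cases ha : a % 2 = 0 <;>
        simp [ha, List.count_cons, List.count_nil] <;>
        by_cases h1 : a = n <;> by_cases h2 : a + 1 = n <;> simp_all <;> omega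
    simp only [List.count_cons]
    rw [hphi]
    cases n with
    | zero => simp; split <;> omega
    | succ m =>
      simp only []
      by_cases hpar : (m+1) % 2 = 0 <;> simp [hpar] <;>
        by_cases h1 : a = m + 1 <;> by_cases h2 : a = m <;> simp_all <;> omega

/-- The number of occurrences of the letter `n` in `W i` equals the binomial coefficient
`C(i - n + ⌊n/2⌋, ⌊n/2⌋)`, where the upper entry is computed in `ℤ` and
`C(x, y) = 0` whenever `x < y` or `x < 0`. -/
theorem zww_letter_count : ∀ i n : ℕ,
    (W i).count n =
      if (i : ℤ) - (n : ℤ) + ((n / 2 : ℕ) : ℤ) < 0 then 0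
      else ((i : ℤ) - (n : ℤ) + ((n / 2 : ℕ) : ℤ)).toNat.choose (n / 2) := by
  intro i
  induction i with
  | zero =>
    intro n
    cases n with
    | zero => simp [W]
    | succ m =>
      have h : ((0:ℕ) : ℤ) - ((m+1 : ℕ) : ℤ) + (((m+1) / 2 : ℕ) : ℤ) < 0 := by
        push_cast; omega
      have hW0 : W 0 = [0] := rfl
      rw [hW0, if_pos h]; simp
  | succ i ih =>
    intro n
    have hW : W (i+1) = (W i).flatMap phi := by
      simp [W, Function.iterate_succ_apply']
    rw [hW, count_flatMap_phi]
    cases n with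
    | zero =>
      simp only [Nat.zero_mod, if_pos rfl]
      rw [ih 0]
      have h1 : ¬ ((i:ℤ) - (0:ℕ) + ((0/2 : ℕ):ℤ) < 0) := by push_cast; omega
      have h2 : ¬ (((i+1:ℕ):ℤ) - (0:ℕ) + ((0/2 : ℕ):ℤ) < 0) := by push_cast; omega
      rw [if_neg h1, if_neg h2]
      simp
    | succ m =>
      rcases Nat.even_or_odd m with hm | hm
      · -- m even, n = m+1 odd
        obtain ⟨j, hj⟩ := hm
        have hpar : ¬ (m+1) % 2 = 0 := by omega
        simp only [hpar, if_false, zero_add]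
        rw [ih m]
        have e1 : ((i+1:ℕ):ℤ) - ((m+1:ℕ):ℤ) + (((m+1)/2 : ℕ):ℤ)
            = (i:ℤ) - (m:ℤ) + ((m/2 : ℕ):ℤ) := by
          have : (m+1)/2 = m/2 := by omega
          
          push_cast [this]; ring
        have e2 : (m+1)/2 = m/2 := by omega
        rw [e1, e2]
      · -- m odd, n = m+1 even
        obtain ⟨k, hk⟩ := hm  -- m = 2k+1
        have hpar : (m+1) % 2 = 0 := by omega
        rw [if_pos hpar]
        simp only []
        rw [ih (m+1), ih m]
        have h1 : (m+1)/2 = k+1 := by omega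
        have h2 : m/2 = k := by omega
        rw [h1, h2]
        by_cases hik : i < k + 1
        · -- everything small
          have c1 : (i:ℤ) - ((m+1:ℕ):ℤ) + ((k+1 : ℕ):ℤ) < 0 := by push_cast; omega
          have c2 : (i:ℤ) - (m:ℤ) + ((k : ℕ):ℤ) < 0 := by push_cast; omega
          rw [if_pos c1, if_pos c2]
          by_cases c3 : ((i+1:ℕ):ℤ) - ((m+1:ℕ):ℤ) + ((k+1 : ℕ):ℤ) < 0
          · rw [if_pos c3]
          · rw [if_neg c3]
            
            have : (((i+1:ℕ):ℤ) - ((m+1:ℕ):ℤ) + ((k+1 : ℕ):ℤ)).toNat = 0 := by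
              push_cast at c3 ⊢; omega
            rw [this]
            simp [Nat.choose_eq_zero_of_lt (by omega : 0 < k + 1)]
        · have c1 : ¬ ((i:ℤ) - ((m+1:ℕ):ℤ) + ((k+1 : ℕ):ℤ) < 0) := by push_cast; omega
          have c2 : ¬ ((i:ℤ) - (m:ℤ) + ((k : ℕ):ℤ) < 0) := by push_cast; omega
          have c3 : ¬ (((i+1:ℕ):ℤ) - ((m+1:ℕ):ℤ) + ((k+1 : ℕ):ℤ) < 0) := by push_cast; omega
          rw [if_neg c1, if_neg c2, if_neg c3]
          have t1 : ((i:ℤ) - ((m+1:ℕ):ℤ) + ((k+1 : ℕ):ℤ)).toNat = i - (k+1) := by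
            push_cast; omega
          have t2 : ((i:ℤ) - (m:ℤ) + ((k : ℕ):ℤ)).toNat = i - (k+1) := by
            push_cast; omega
          have t3 : (((i+1:ℕ):ℤ) - ((m+1:ℕ):ℤ) + ((k+1 : ℕ):ℤ)).toNat = (i - (k+1)) + 1 := by
            push_cast; omega
          rw [t1, t2, t3, Nat.choose_succ_succ]
          simp only [Nat.succ_eq_add_one]
          omega
end

section
/- For every k ≥ 0, the number of distinct square factors of W_{k+1} equals ⌊k/2⌋ · ⌈k/2⌉. -/
def sh (w : List ℕ) : List ℕ := w.map (· + 2)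

def Y (k : ℕ) : List ℕ := (List.range k).flatMap W

lemma sh_append (a b : List ℕ) : sh (a ++ b) = sh a ++ sh b := by simp [sh]

lemma phi_sh (a : ℕ) : phi (a + 2) = sh (phi a) := by
  unfold phi sh
  rcases Nat.even_or_odd a with h | h
  · simp [Nat.even_iff.mp h, Nat.add_mod_right]
  · simp [Nat.odd_iff.mp h, Nat.add_mod_right]

lemma flatMap_sh (w : List ℕ) : (sh w).flatMap phi = sh (w.flatMap phi) := by
  induction w with
  | nil => rfl
  | cons a l ih =>
      simp only [sh, List.map_cons, List.flatMap_cons] at *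
      rw [ih]; rw [← sh, ← sh, phi_sh, sh_append]

lemma W_rec (n : ℕ) : W (n + 2) = W (n + 1) ++ sh (W n) := by
  induction n with
  | zero => decide
  | succ n ih =>
      rw [W_succ (n+2), ih, List.flatMap_append, flatMap_sh, ← W_succ, ← W_succ, ih]

lemma Y_succ (k : ℕ) : Y (k + 1) = Y k ++ W k := by
  unfold Y; rw [List.range_succ, List.flatMap_append]; simp

lemma W_eq (n : ℕ) : W (n + 1) = [0, 1] ++ sh (Y n) := by
  induction n with
  | zero => decide
  | succ n ih =>
      rw [W_rec, ih, Y_succ, sh_append, List.append_assoc]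

lemma W_ne_nil (n : ℕ) : W n ≠ [] := by
  cases n with
  | zero => decide
  | succ n => rw [W_eq]; simp

lemma W_head (n : ℕ) : ∃ t, W n = 0 :: t := by
  cases n with
  | zero => exact ⟨[], rfl⟩
  | succ n => exact ⟨1 :: sh (Y n), by rw [W_eq]; rfl⟩

lemma length_W_lt (n : ℕ) : (W n).length < (W (n + 1)).length := by
  cases n with
  | zero => decide
  | succ n =>
      rw [W_rec]; simp only [List.length_append]
      have := W_ne_nil n
      have : 0 < (sh (W n)).length := by
        simp [sh, List.length_pos_iff, this]
      omega

lemma length_W_strictMono : StrictMono (fun n => (W n).length) :=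
  strictMono_nat_of_lt_succ length_W_lt

lemma W_prefix (n : ℕ) : W n <+: W (n + 1) := by
  cases n with
  | zero => decide
  | succ n => rw [W_rec]; exact List.prefix_append _ _

lemma W_prefix_le {m n : ℕ} (h : m ≤ n) : W m <+: W n := by
  induction n with
  | zero => cases Nat.le_zero.mp h; exact List.prefix_refl _
  | succ n ih =>
      rcases Nat.lt_or_ge m (n+1) with h' | h'
      · exact (ih (by omega)).trans (W_prefix n)
      · have : m = n + 1 := by omega
        subst this; exact List.prefix_refl _

lemma Y_prefix_le {m n : ℕ} (h : m ≤ n) : Y m <+: Y n := by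
  induction n with
  | zero => cases Nat.le_zero.mp h; exact List.prefix_refl _
  | succ n ih =>
      rcases Nat.lt_or_ge m (n+1) with h' | h'
      · exact (ih (by omega)).trans (by rw [Y_succ]; exact List.prefix_append _ _)
      · have : m = n + 1 := by omega
        subst this; exact List.prefix_refl _

lemma sh_ge_two {x : ℕ} {w : List ℕ} (h : x ∈ sh w) : 2 ≤ x := by
  simp only [sh, List.mem_map] at h
  obtain ⟨a, -, rfl⟩ := h; omega

lemma count_zero_W (n : ℕ) : (W n).count 0 = 1 := by
  cases n with
  | zero => decide
  | succ n =>
      rw [W_eq]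
      have h0 : (sh (Y n)).count 0 = 0 := by
        rw [List.count_eq_zero]; intro h; have := sh_ge_two h; omega
      simp [List.count_append, h0]

lemma count_one_W (n : ℕ) : (W (n + 1)).count 1 = 1 := by
  rw [W_eq]
  have h0 : (sh (Y n)).count 1 = 0 := by
    rw [List.count_eq_zero]; intro h; have := sh_ge_two h; omega
  simp [List.count_append, h0]

lemma count_zero_Y (k : ℕ) : (Y k).count 0 = k := by
  induction k with
  | zero => rfl
  | succ k ih => rw [Y_succ, List.count_append, ih, count_zero_W]

lemma W_last (n : ℕ) : ∃ t, W n = t ++ [n] := by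
  induction n using Nat.twoStepInduction with
  | zero => exact ⟨[], rfl⟩
  | one => exact ⟨[0], rfl⟩
  | more n ih _ =>
      obtain ⟨t, ht⟩ := ih
      exact ⟨W (n+1) ++ sh t, by rw [W_rec, ht, sh_append, List.append_assoc]; rfl⟩

lemma Y_last (c : ℕ) : ∃ t, Y (c + 1) = t ++ [c] := by
  obtain ⟨t, ht⟩ := W_last c
  exact ⟨Y c ++ t, by rw [Y_succ, ht, List.append_assoc]⟩

lemma W_cons_tail (k : ℕ) : ∃ t, W k = 0 :: t ∧ 0 ∉ t := by
  obtain ⟨t, ht⟩ := W_head k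
  refine ⟨t, ht, ?_⟩
  have := count_zero_W k
  rw [ht] at this
  simp only [List.count_cons_self] at this
  intro hm
  have h2 : 0 < t.count 0 := List.count_pos_iff.mpr hm
  omega

lemma getLast?_suffix {p q γ : List ℕ} {a : ℕ} (hne : q ≠ [])
    (h : p ++ q = γ) (hg : ∃ t, γ = t ++ [a]) : q.getLast? = some a := by
  obtain ⟨t, rfl⟩ := hg
  have : (p ++ q).getLast? = some a := by rw [h]; exact List.getLast?_concat
  rw [List.getLast?_append, List.getLast?_eq_getLast hne] at this
  simp only [Option.or] at this
  rw [List.getLast?_eq_getLast hne, this]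

/-- first-occurrence split -/
lemma first_split {a : ℕ} : ∀ {l : List ℕ}, a ∈ l → ∃ s t, l = s ++ a :: t ∧ a ∉ s := by
  intro l hl
  induction l with
  | nil => cases hl
  | cons b l ih =>
      by_cases hb : a = b
      · exact ⟨[], l, by rw [hb]; rfl, by simp⟩
      · have : a ∈ l := by cases hl with
          | head => exact absurd rfl hb
          | tail _ h => exact h
        obtain ⟨s, t, rfl, hs⟩ := ih this
        exact ⟨b :: s, t, rfl, by simp [hs, hb]⟩

/-- L0: master synchronization lemma -/
lemma zero_sync : ∀ (k : ℕ) (x z : List ℕ), Y k = x ++ 0 :: z → x = Y (x.count 0) := by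
  intro k
  induction k with
  | zero =>
      intro x z h
      exact absurd h.symm (by simp [Y])
  | succ k ih =>
      intro x z h
      rw [Y_succ] at h
      rcases List.append_eq_append_iff.mp h.symm with ⟨a', ha1, ha2⟩ | ⟨c', hc1, hc2⟩
      · -- Y k = x ++ a', a' ++ W k = 0 :: z
        cases a' with
        | nil =>
            simp at ha1
            subst ha1
            rw [count_zero_Y]
        | cons b a'' =>
            have hb : b = 0 := by
              have := congrArg (fun l => l.head?) ha2
              simpa using this.symm
            subst hb
            exact ih x a'' ha1
      · -- x = Y k ++ c', c' ++ 0 :: z = W k  (hc2 : 0 :: z = c' ++ ... direction?)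
        obtain ⟨t, hW, ht0⟩ := W_cons_tail k
        cases c' with
        | nil =>
            simp at hc1
            subst hc1
            rw [count_zero_Y]
        | cons b c'' =>
            exfalso
            rw [hW] at hc2
            have hb : b = 0 := by
              have := congrArg (fun l => l.head?) hc2
              simpa using this.symm
            subst hb
            have : t = c'' ++ 0 :: z := by
              have := congrArg List.tail hc2
              simpa using this
            exact ht0 (by rw [this]; simp)

lemma count_eq_zero_of_not_mem {a : ℕ} {l : List ℕ} (h : a ∉ l) : l.count a = 0 :=
  List.count_eq_zero.mpr h

lemma square_with_zero {k : ℕ} {v : List ℕ} (hv : v ≠ [])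
    (hinf : v ++ v <:+: Y k) (h0 : (0:ℕ) ∈ v) : ∃ c, c + 2 ≤ k ∧ v = W c := by
  obtain ⟨pre, post, hY⟩ := hinf
  obtain ⟨α, β, hvdef, hα⟩ := first_split h0
  subst hvdef
  have hcα := count_eq_zero_of_not_mem hα
  have hx1 : Y k = (pre ++ α) ++ 0 :: (β ++ (α ++ 0 :: β) ++ post) := by
    rw [← hY]; simp [List.append_assoc]
  have h1 := zero_sync k _ _ hx1
  rw [show (pre ++ α).count 0 = pre.count 0 by simp [List.count_append, hcα]] at h1
  set c := pre.count 0 with hcdef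
  by_cases hβ : (0:ℕ) ∈ β
  · -- at least two zeros in v : contradiction
    exfalso
    obtain ⟨β₁, β₂, hbdef, hβ₁⟩ := first_split hβ
    subst hbdef
    have hcβ₁ := count_eq_zero_of_not_mem hβ₁
    have hx2 : Y k = (pre ++ α ++ 0 :: β₁) ++
        0 :: (β₂ ++ (α ++ 0 :: (β₁ ++ 0 :: β₂)) ++ post) := by
      rw [← hY]; simp [List.append_assoc]
    have h2 := zero_sync k _ _ hx2
    rw [show (pre ++ α ++ 0 :: β₁).count 0 = c + 1 by
      simp [List.count_append, List.count_cons, hcα, hcβ₁, hcdef]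
      try omega] at h2
    rw [Y_succ] at h2
    have e2 : (0 : ℕ) :: β₁ = W c := by
      have key : pre ++ α ++ (0 :: β₁) = pre ++ α ++ W c := by
        have lhs : pre ++ α ++ (0 :: β₁) = pre ++ α ++ 0 :: β₁ := by
          simp [List.append_assoc]
        rw [lhs, h2, h1]
      exact List.append_cancel_left key
    set m := (α ++ 0 :: (β₁ ++ 0 :: β₂)).count 0 with hmdef
    have hm2 : 2 ≤ m := by
      simp [hmdef, List.count_append, List.count_cons, hcα, hcβ₁]
    have hx3 : Y k = (pre ++ (α ++ 0 :: (β₁ ++ 0 :: β₂)) ++ α) ++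
        0 :: (β₁ ++ 0 :: (β₂ ++ post)) := by
      rw [← hY]; simp [List.append_assoc]
    have h3 := zero_sync k _ _ hx3
    rw [show (pre ++ (α ++ 0 :: (β₁ ++ 0 :: β₂)) ++ α).count 0 = c + m by
      simp [List.count_append, hcα, hmdef, hcdef]
      try omega] at h3
    have hx4 : Y k = (pre ++ (α ++ 0 :: (β₁ ++ 0 :: β₂)) ++ α ++ 0 :: β₁) ++
        0 :: (β₂ ++ post) := by
      rw [← hY]; simp [List.append_assoc]
    have h4 := zero_sync k _ _ hx4
    rw [show (pre ++ (α ++ 0 :: (β₁ ++ 0 :: β₂)) ++ α ++ 0 :: β₁).count 0 = (c + m) + 1 by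
      simp [List.count_append, List.count_cons, hcα, hcβ₁, hmdef, hcdef]
      try omega] at h4
    rw [Y_succ] at h4
    have e4 : (0 : ℕ) :: β₁ = W (c + m) := by
      have key : (pre ++ (α ++ 0 :: (β₁ ++ 0 :: β₂)) ++ α) ++ (0 :: β₁)
          = (pre ++ (α ++ 0 :: (β₁ ++ 0 :: β₂)) ++ α) ++ W (c + m) := by
        have lhs : (pre ++ (α ++ 0 :: (β₁ ++ 0 :: β₂)) ++ α) ++ (0 :: β₁)
            = pre ++ (α ++ 0 :: (β₁ ++ 0 :: β₂)) ++ α ++ 0 :: β₁ := by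
          simp [List.append_assoc]
        rw [lhs, h4, h3]
      exact List.append_cancel_left key
    have hlen : (W c).length = (W (c + m)).length := by rw [← e2, ← e4]
    have := length_W_strictMono (show c < c + m by omega)
    simp only at this
    omega
  · -- exactly one zero in v
    have hcβ := count_eq_zero_of_not_mem hβ
    have hx2 : Y k = (pre ++ (α ++ 0 :: β) ++ α) ++ 0 :: (β ++ post) := by
      rw [← hY]; simp [List.append_assoc]
    have h2 := zero_sync k _ _ hx2
    rw [show (pre ++ (α ++ 0 :: β) ++ α).count 0 = c + 1 by
      simp [List.count_append, List.count_cons, hcα, hcβ, hcdef]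
      try omega] at h2
    rw [Y_succ] at h2
    have e2 : (0 : ℕ) :: (β ++ α) = W c := by
      have key : pre ++ α ++ (0 :: (β ++ α)) = pre ++ α ++ W c := by
        have lhs : pre ++ α ++ (0 :: (β ++ α)) = pre ++ (α ++ 0 :: β) ++ α := by
          simp [List.append_assoc]
        rw [lhs, h2, h1]
      exact List.append_cancel_left key
    cases hαe : α with
    | nil =>
        subst hαe
        refine ⟨c, ?_, by simpa using e2⟩
        -- count zeros: k ≥ c + 2
        have hk := count_zero_Y k
        rw [← hY] at hk
        simp [List.count_append, List.count_cons, hcα, hcβ, ← hcdef] at hk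
        omega
    | cons a α' =>
        exfalso
        have hαne : α ≠ [] := by rw [hαe]; simp
        cases hc0 : c with
        | zero =>
            rw [hc0] at h1
            have : pre ++ α = [] := h1
            have : α = [] := by
              rcases List.append_eq_nil_iff.mp this with ⟨-, h⟩; exact h
            exact hαne this
        | succ c' =>
            have g1 : α.getLast? = some c' :=
              getLast?_suffix hαne h1 (by rw [hc0]; exact Y_last c')
            have e2' : (0 :: β) ++ α = W c := by rw [← e2]; rfl
            have g2 : α.getLast? = some c := getLast?_suffix hαne e2' (W_last c)
            rw [g1] at g2
            injection g2 with g2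
            omega

lemma infix_of_cons {u l : List ℕ} {a : ℕ} (hne : u ≠ []) (h : u <:+: a :: l)
    (ha : a ∉ u) : u <:+: l := by
  obtain ⟨p, s, hp⟩ := h
  cases p with
  | nil =>
      exfalso
      cases u with
      | nil => exact hne rfl
      | cons b u' =>
          have : b = a := by
            have := congrArg (fun l => l.head?) hp
            simpa using this
          exact ha (by rw [this]; exact List.mem_cons_self)
  | cons b p' =>
      have : p' ++ u ++ s = l := by
        have := congrArg List.tail hp
        simpa using this
      exact ⟨p', s, this⟩

lemma infix_append_cases {u x y : List ℕ} (h : u <:+: x ++ y) :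
    u <:+: x ∨ u <:+: y ∨
      ∃ a b, u = a ++ b ∧ a ≠ [] ∧ b ≠ [] ∧ a <:+ x ∧ b <+: y := by
  obtain ⟨p, s, hp⟩ := h
  rw [List.append_assoc] at hp
  rcases List.append_eq_append_iff.mp hp with ⟨a', ha1, ha2⟩ | ⟨c', hc1, hc2⟩
  · -- x = p ++ a', u ++ s = a' ++ y
    rcases List.append_eq_append_iff.mp ha2 with ⟨b', hb1, hb2⟩ | ⟨d', hd1, hd2⟩
    · -- a' = u ++ b', s = b' ++ y : u inside x
      left
      exact ⟨p, b', by rw [ha1, hb1, List.append_assoc]⟩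
    · -- u = a' ++ d', y = d' ++ s
      rcases eq_or_ne a' [] with rfl | hane
      · right; left
        exact ⟨[], s, by simpa using ha2⟩
      rcases eq_or_ne d' [] with rfl | hdne
      · left
        exact ⟨p, [], by simp [ha1, hd1]⟩
      · right; right
        exact ⟨a', d', hd1, hane, hdne, ⟨p, ha1.symm⟩, ⟨s, hd2.symm⟩⟩
  · -- p = x ++ c', y = c' ++ (u ++ s)
    right; left
    exact ⟨c', s, by rw [hc2, List.append_assoc]⟩

lemma tail_prefix_tail {l₁ l₂ : List ℕ} (h : l₁ <+: l₂) : l₁.tail <+: l₂.tail := by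
  obtain ⟨t, rfl⟩ := h
  cases l₁ with
  | nil => simp
  | cons a l => simpa using List.prefix_append l t

lemma zero_free_infix : ∀ (k : ℕ) {u : List ℕ}, u ≠ [] → u <:+: Y (k + 1) →
    (0:ℕ) ∉ u → u <:+: (W k).tail := by
  intro k
  induction k with
  | zero =>
      intro u hne h h0
      exfalso
      have : u <:+: ([] : List ℕ) := by
        have h' : u <:+: [(0:ℕ)] := by
          have : Y 1 = [0] := by decide
          rwa [this] at h
        exact infix_of_cons hne h' h0
      rw [List.infix_nil] at this
      exact hne this
  | succ k ih =>
      intro u hne h h0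
      rw [Y_succ] at h
      obtain ⟨t, hW, -⟩ := W_cons_tail (k + 1)
      rcases infix_append_cases h with h' | h' | ⟨a, b, rfl, hane, hbne, ha, hb⟩
      · have h1 := ih hne h' h0
        have h2 : (W k).tail <+: (W (k+1)).tail := tail_prefix_tail (W_prefix k)
        exact h1.trans h2.isInfix
      · have : u <:+: t := by
          rw [hW] at h'
          exact infix_of_cons hne h' h0
        rw [hW]
        simpa using this
      · exfalso
        apply h0
        have : (0:ℕ) ∈ b := by
          obtain ⟨s', hs'⟩ := hb
          rw [hW] at hs'
          cases b with
          | nil => exact absurd rfl hbne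
          | cons x b' =>
              have : x = 0 := by
                have := congrArg (fun l => l.head?) hs'
                simpa using this
              rw [this]; exact List.mem_cons_self
        exact List.mem_append.mpr (Or.inr this)

lemma infix_sh {u w : List ℕ} (h : u <:+: sh w) : ∃ u', u = sh u' ∧ u' <:+: w := by
  obtain ⟨p, s, hp⟩ := h
  unfold sh at hp
  obtain ⟨l₁, l₂, hw, hm1, hm2⟩ := List.map_eq_append_iff.mp hp.symm
  obtain ⟨l₃, l₄, hw2, hm3, hm4⟩ := List.map_eq_append_iff.mp hm1
  exact ⟨l₄, hm4.symm, ⟨l₃, l₂, by rw [hw, hw2, List.append_assoc]⟩⟩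

lemma sh_injective : Function.Injective sh := by
  intro a b h
  unfold sh at h
  exact List.map_injective_iff.mpr (fun x y hxy => by simpa using hxy) h

lemma count_square (a : ℕ) (v : List ℕ) : (v ++ v).count a = 2 * v.count a := by
  rw [List.count_append]; omega

lemma not_mem_of_even_le_one {a : ℕ} {v w : List ℕ} (h : v ++ v <:+: w)
    (hw : w.count a ≤ 1) : a ∉ v := by
  intro hm
  have h1 : (v ++ v).count a ≤ w.count a := h.sublist.count_le a
  rw [count_square] at h1
  have h2 : 0 < v.count a := List.count_pos_iff.mpr hm
  omega

lemma square_W_iff {k : ℕ} {v : List ℕ} (hv : v ≠ []) :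
    v ++ v <:+: W (k + 1) ↔ ∃ v', v = sh v' ∧ v' ≠ [] ∧ v' ++ v' <:+: Y k := by
  constructor
  · intro h
    have hW : W (k + 1) = 0 :: 1 :: sh (Y k) := by rw [W_eq]; rfl
    have h0 : (0:ℕ) ∉ v := by
      apply not_mem_of_even_le_one h
      rw [count_zero_W]
    have h1 : (1:ℕ) ∉ v := by
      apply not_mem_of_even_le_one h
      rw [count_one_W]
    have hne : v ++ v ≠ [] := by simp [hv]
    rw [hW] at h
    have h0' : (0:ℕ) ∉ v ++ v := by simp [h0]
    have h1' : (1:ℕ) ∉ v ++ v := by simp [h1]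
    have h2 := infix_of_cons hne (infix_of_cons hne h h0') h1'
    obtain ⟨u', hu, hinf⟩ := infix_sh h2
    obtain ⟨l₁, l₂, hw, hm1, hm2⟩ := List.map_eq_append_iff.mp (show List.map (· + 2) u' = v ++ v from hu.symm)
    have hmap : List.map (fun x : ℕ => x + 2) l₁ = List.map (fun x : ℕ => x + 2) l₂ := by
      rw [hm1, hm2]
    have hl : l₁ = l₂ := List.map_injective_iff.mpr (fun x y hxy => by simpa using hxy) hmap
    refine ⟨l₁, hm1.symm, ?_, ?_⟩
    · intro hnil
      rw [hnil] at hm1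
      simp only [List.map_nil] at hm1
      exact hv hm1.symm
    · rw [hw, ← hl] at hinf
      exact hinf
  · rintro ⟨v', rfl, hne, hinf⟩
    have : sh (v' ++ v') <:+: sh (Y k) := by
      obtain ⟨p, s, hp⟩ := hinf
      exact ⟨sh p, sh s, by rw [← sh_append, ← sh_append, hp]⟩
    rw [sh_append] at this
    have hsuf : sh (Y k) <:+: W (k + 1) := by
      rw [W_eq]
      exact ⟨[0, 1], [], by simp⟩
    exact this.trans hsuf

def squaresOf (w : List ℕ) : Set (List ℕ) :=
  {u : List ℕ | (∃ v : List ℕ, v ≠ [] ∧ u = v ++ v) ∧ u <:+: w}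

def sqw (i j : ℕ) : List ℕ := (W j ++ W j).map (· + 2 * i)

lemma sq_zero (j : ℕ) : sqw 0 j = W j ++ W j := by simp [sqw]

lemma sq_succ (i j : ℕ) : sqw (i + 1) j = sh (sqw i j) := by
  unfold sqw sh
  rw [List.map_map]
  apply List.map_congr_left
  intro a _
  simp; omega

lemma sq_ne_nil (i j : ℕ) : sqw i j ≠ [] := by
  unfold sqw
  simp [W_ne_nil j]

lemma square_no_zero {k : ℕ} {v : List ℕ} (hv : v ≠ [])
    (hinf : v ++ v <:+: Y (k + 2)) (h0 : (0:ℕ) ∉ v) :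
    ∃ v', v' ≠ [] ∧ v = sh v' ∧ v' ++ v' <:+: Y k := by
  have hne : v ++ v ≠ [] := by simp [hv]
  have h0' : (0:ℕ) ∉ v ++ v := by simp [h0]
  have h2 := zero_free_infix (k + 1) hne hinf h0'
  have htail : (W (k + 1)).tail = 1 :: sh (Y k) := by rw [W_eq]; rfl
  rw [htail] at h2
  have h1 : (1:ℕ) ∉ v := by
    apply not_mem_of_even_le_one (w := (1:ℕ) :: sh (Y k)) h2
    have : ((sh (Y k)).count 1) = 0 := by
      rw [List.count_eq_zero]; intro h; have := sh_ge_two h; omega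
    simp [List.count_cons, this]
  have h1' : (1:ℕ) ∉ v ++ v := by simp [h1]
  have h3 := infix_of_cons hne h2 h1'
  obtain ⟨u', hu, hinf'⟩ := infix_sh h3
  obtain ⟨l₁, l₂, hw, hm1, hm2⟩ :=
    List.map_eq_append_iff.mp (show List.map (· + 2) u' = v ++ v from hu.symm)
  have hmap : List.map (fun x : ℕ => x + 2) l₁ = List.map (fun x : ℕ => x + 2) l₂ := by
    rw [hm1, hm2]
  have hl : l₁ = l₂ := List.map_injective_iff.mpr (fun x y hxy => by simpa using hxy) hmap
  refine ⟨l₁, ?_, hm1.symm, ?_⟩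
  · intro hnil
    rw [hnil] at hm1
    simp only [List.map_nil] at hm1
    exact hv hm1.symm
  · rw [hw, ← hl] at hinf'
    exact hinf'

lemma sq_mem : ∀ (i k j : ℕ), 2 * i + j + 2 ≤ k → sqw i j ∈ squaresOf (Y k) := by
  intro i
  induction i with
  | zero =>
      intro k j h
      constructor
      · exact ⟨W j, W_ne_nil j, sq_zero j⟩
      · rw [sq_zero]
        obtain ⟨t, ht⟩ := W_prefix_le (show j ≤ j + 1 by omega)
        have h1 : W j ++ W j <+: W j ++ W (j + 1) := by
          rw [← ht]
          exact ⟨t, by rw [List.append_assoc]⟩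
        have h2 : W j ++ W (j + 1) <:+: Y (j + 2) := by
          rw [Y_succ, Y_succ]
          exact ⟨Y j, [], by simp [List.append_assoc]⟩
        obtain ⟨t', ht'⟩ := Y_prefix_le (show j + 2 ≤ k by omega)
        exact (h1.isInfix.trans h2).trans ⟨[], t', by simp [ht']⟩
  | succ i ih =>
      intro k j h
      obtain ⟨k', rfl⟩ : ∃ k', k = k' + 2 := ⟨k - 2, by omega⟩
      obtain ⟨⟨v, hv, hveq⟩, hinf⟩ := ih k' j (by omega)
      rw [sq_succ]
      constructor
      · exact ⟨sh v, by simp [sh, hv], by rw [hveq, sh_append]⟩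
      · have hsh : sh (sqw i j) <:+: sh (Y k') := by
          obtain ⟨p, s, hp⟩ := hinf
          exact ⟨sh p, sh s, by rw [← sh_append, ← sh_append, hp]⟩
        have hsuf : sh (Y k') <:+: W (k' + 1) := by
          rw [W_eq]; exact ⟨[0, 1], [], by simp⟩
        have hlast : W (k' + 1) <:+: Y (k' + 2) := by
          rw [Y_succ]; exact ⟨Y (k' + 1), [], by simp⟩
        exact (hsh.trans hsuf).trans hlast

lemma squares_Y : ∀ k : ℕ,
    squaresOf (Y k) = {u | ∃ i j, 2 * i + j + 2 ≤ k ∧ u = sqw i j} := by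
  intro k
  induction k using Nat.twoStepInduction with
  | zero =>
      ext u
      simp only [squaresOf, Set.mem_setOf_eq]
      constructor
      · rintro ⟨⟨v, hv, rfl⟩, hinf⟩
        exfalso
        have : Y 0 = [] := rfl
        rw [this, List.infix_nil] at hinf
        exact hv (List.append_eq_nil_iff.mp hinf).1
      · rintro ⟨i, j, hij, -⟩; omega
  | one =>
      ext u
      simp only [squaresOf, Set.mem_setOf_eq]
      constructor
      · rintro ⟨⟨v, hv, rfl⟩, hinf⟩
        exfalso
        have hY : Y 1 = [0] := by decide
        rw [hY] at hinf
        have hlen := hinf.sublist.length_le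
        have : 1 ≤ v.length := List.length_pos_iff.mpr hv
        simp only [List.length_append, List.length_cons, List.length_nil] at hlen
        omega
      · rintro ⟨i, j, hij, -⟩; omega
  | more k ihk _ =>
      ext u
      simp only [squaresOf, Set.mem_setOf_eq]
      constructor
      · rintro ⟨⟨v, hv, rfl⟩, hinf⟩
        by_cases h0 : (0:ℕ) ∈ v
        · obtain ⟨c, hc, rfl⟩ := square_with_zero hv hinf h0
          exact ⟨0, c, by omega, (sq_zero c).symm⟩
        · obtain ⟨v', hv', rfl, hinf'⟩ := square_no_zero hv hinf h0
          have : v' ++ v' ∈ squaresOf (Y k) := ⟨⟨v', hv', rfl⟩, hinf'⟩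
          rw [ihk] at this
          obtain ⟨i, j, hij, heq⟩ := this
          refine ⟨i + 1, j, by omega, ?_⟩
          rw [sq_succ, ← heq, sh_append]
      · rintro ⟨i, j, hij, rfl⟩
        exact sq_mem i (k + 2) j hij

lemma squares_W (k : ℕ) :
    squaresOf (W (k + 1)) = {u | ∃ i j, 2 * i + j + 2 ≤ k ∧ u = sqw (i + 1) j} := by
  ext u
  simp only [squaresOf, Set.mem_setOf_eq]
  constructor
  · rintro ⟨⟨v, hv, rfl⟩, hinf⟩
    obtain ⟨v', hveq, hv', hinf'⟩ := (square_W_iff hv).mp hinf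
    have : v' ++ v' ∈ squaresOf (Y k) := ⟨⟨v', hv', rfl⟩, hinf'⟩
    rw [squares_Y] at this
    obtain ⟨i, j, hij, heq⟩ := this
    refine ⟨i, j, hij, ?_⟩
    rw [sq_succ, ← heq, hveq, sh_append]
  · rintro ⟨i, j, hij, rfl⟩
    have hmem : sqw i j ∈ squaresOf (Y k) := by
      rw [squares_Y]; exact ⟨i, j, hij, rfl⟩
    obtain ⟨⟨v, hv, hveq⟩, hinf⟩ := hmem
    refine ⟨⟨sh v, by simp [sh, hv], by rw [sq_succ, hveq, sh_append]⟩, ?_⟩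
    rw [sq_succ, hveq, sh_append]
    exact (square_W_iff (by simp [sh, hv])).mpr ⟨v, rfl, hv, by rwa [← hveq]⟩

lemma sq_length (i j : ℕ) : (sqw i j).length = 2 * (W j).length := by
  simp [sqw]; omega

lemma sq_head (i j : ℕ) : (sqw i j).head? = some (2 * i) := by
  obtain ⟨t, ht⟩ := W_head j
  unfold sqw
  rw [ht]
  simp

lemma sq_inj : Function.Injective (fun p : ℕ × ℕ => sqw (p.1 + 1) p.2) := by
  rintro ⟨i, j⟩ ⟨i', j'⟩ h
  simp only at h
  have hj : j = j' := by
    have := congrArg List.length h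
    rw [sq_length, sq_length] at this
    have := length_W_strictMono.injective (show (W j).length = (W j').length by omega)
    exact this
  have hi : i = i' := by
    have := congrArg List.head? h
    rw [sq_head, sq_head] at this
    injection this with this
    omega
  simp [hi, hj]

lemma A_finite (m : ℕ) : {p : ℕ × ℕ | 2 * p.1 + p.2 + 2 ≤ m}.Finite := by
  apply ((Set.finite_Iic m).prod (Set.finite_Iic m)).subset
  rintro ⟨i, j⟩ h
  simp only [Set.mem_setOf_eq] at h
  exact ⟨Set.mem_Iic.mpr (by omega), Set.mem_Iic.mpr (by omega)⟩

lemma A_card : ∀ k : ℕ, {p : ℕ × ℕ | 2 * p.1 + p.2 + 2 ≤ k}.ncard = k / 2 * ((k + 1) / 2) := by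
  intro k
  induction k using Nat.twoStepInduction with
  | zero =>
      convert Set.ncard_empty (ℕ × ℕ)
      ext ⟨i, j⟩
      simp only [Set.mem_setOf_eq, Set.mem_empty_iff_false, iff_false]
      omega
  | one =>
      convert Set.ncard_empty (ℕ × ℕ)
      ext ⟨i, j⟩
      simp only [Set.mem_setOf_eq, Set.mem_empty_iff_false, iff_false]
      omega
  | more k ih _ =>
      have hdec : {p : ℕ × ℕ | 2 * p.1 + p.2 + 2 ≤ k + 2} =
          ((fun j => ((0:ℕ), j)) '' Set.Iic k) ∪
          ((fun p : ℕ × ℕ => (p.1 + 1, p.2)) '' {p : ℕ × ℕ | 2 * p.1 + p.2 + 2 ≤ k}) := by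
        ext ⟨i, j⟩
        simp only [Set.mem_union, Set.mem_image, Set.mem_setOf_eq, Set.mem_Iic,
          Prod.mk.injEq, Prod.exists]
        constructor
        · intro h
          cases i with
          | zero => exact Or.inl ⟨j, by omega, rfl, rfl⟩
          | succ i' => exact Or.inr ⟨i', j, by omega, rfl, rfl⟩
        · rintro (⟨a, ha, hi, hj⟩ | ⟨a, b, hab, hi, hj⟩) <;> omega
      have hdisj : Disjoint ((fun j => ((0:ℕ), j)) '' Set.Iic k)
          ((fun p : ℕ × ℕ => (p.1 + 1, p.2)) '' {p : ℕ × ℕ | 2 * p.1 + p.2 + 2 ≤ k}) := by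
        rw [Set.disjoint_left]
        rintro p ⟨a, -, rfl⟩ ⟨⟨b, c⟩, -, hbc⟩
        have := congrArg Prod.fst hbc
        simp at this
      have hfin1 : ((fun j => ((0:ℕ), j)) '' Set.Iic k).Finite :=
        (Set.finite_Iic k).image _
      have hfin2 : ((fun p : ℕ × ℕ => (p.1 + 1, p.2)) ''
          {p : ℕ × ℕ | 2 * p.1 + p.2 + 2 ≤ k}).Finite := (A_finite k).image _
      rw [hdec, Set.ncard_union_eq hdisj hfin1 hfin2]
      have hinj1 : Function.Injective (fun j : ℕ => ((0:ℕ), j)) := by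
        intro a b h; simpa using h
      have hinj2 : Function.Injective (fun p : ℕ × ℕ => (p.1 + 1, p.2)) := by
        rintro ⟨a, b⟩ ⟨c, d⟩ h
        simp only [Prod.mk.injEq] at h
        simp [Prod.ext_iff]; omega
      rw [Set.ncard_image_of_injective _ hinj1, Set.ncard_image_of_injective _ hinj2, ih]
      have hIic : (Set.Iic k).ncard = k + 1 := by
        rw [← Finset.coe_Iic, Set.ncard_coe_finset, Nat.card_Iic]
      rw [hIic]
      obtain ⟨m, rfl | rfl⟩ := Nat.even_or_odd' k
      · have e1 : 2 * m / 2 = m := by omega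
        have e2 : (2 * m + 1) / 2 = m := by omega
        have e3 : (2 * m + 2) / 2 = m + 1 := by omega
        have e4 : (2 * m + 2 + 1) / 2 = m + 1 := by omega
        rw [e1, e2, e3, e4]; ring
      · have e1 : (2 * m + 1) / 2 = m := by omega
        have e2 : (2 * m + 1 + 1) / 2 = m + 1 := by omega
        have e3 : (2 * m + 1 + 2) / 2 = m + 1 := by omega
        have e4 : (2 * m + 1 + 2 + 1) / 2 = m + 2 := by omega
        rw [e1, e2, e3, e4]; ring

/-- For every `k ≥ 0`, the number of distinct square factors of `W (k+1)`
equals `⌊k/2⌋ * ⌈k/2⌉`. -/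
theorem zww_distinct_squares_count : ∀ k : ℕ,
    {u : List ℕ | (∃ v : List ℕ, v ≠ [] ∧ u = v ++ v) ∧ u <:+: W (k + 1)}.ncard =
      (k / 2) * ((k + 1) / 2) := by
  intro k
  have h1 : {u : List ℕ | (∃ v : List ℕ, v ≠ [] ∧ u = v ++ v) ∧ u <:+: W (k + 1)} =
      squaresOf (W (k + 1)) := rfl
  rw [h1, squares_W k]
  have h2 : {u | ∃ i j, 2 * i + j + 2 ≤ k ∧ u = sqw (i + 1) j} =
      (fun p : ℕ × ℕ => sqw (p.1 + 1) p.2) '' {p : ℕ × ℕ | 2 * p.1 + p.2 + 2 ≤ k} := by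
    ext u
    simp only [Set.mem_setOf_eq, Set.mem_image, Prod.exists]
    constructor
    · rintro ⟨i, j, hij, rfl⟩; exact ⟨i, j, hij, rfl⟩
    · rintro ⟨i, j, hij, rfl⟩; exact ⟨i, j, hij, rfl⟩
  rw [h2, Set.ncard_image_of_injective _ sq_inj, A_card]
end

section
/- For all n ≥ 0, the word W_n is a Lyndon word with respect to the standard order on ℕ. -/
/-- A nonempty word is Lyndon if it is lexicographically strictly less than each of its
conjugates `v ++ u` where `x = u ++ v` with `u, v` nonempty. -/
def IsLyndon (x : List ℕ) : Prop :=
  x ≠ [] ∧ ∀ u v : List ℕ, u ≠ [] → v ≠ [] → x = u ++ v → List.Lex (· < ·) x (v ++ u)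

lemma phi_pos {a b : ℕ} (ha : 0 < a) (hb : b ∈ phi a) : 0 < b := by
  unfold phi at hb
  split at hb <;> simp at hb <;> omega

lemma W_structure : ∀ n : ℕ, ∃ t : List ℕ, W n = 0 :: t ∧ ∀ x ∈ t, 0 < x := by
  intro n
  induction n with
  | zero => exact ⟨[], rfl, by simp⟩
  | succ n ih =>
    obtain ⟨t, ht, hpos⟩ := ih
    refine ⟨1 :: t.flatMap phi, ?_, ?_⟩
    · have : W (n + 1) = (W n).flatMap phi := Function.iterate_succ_apply' _ n [0]
      rw [this, ht]
      simp [phi]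
    · intro x hx
      rcases List.mem_cons.mp hx with h | h
      · omega
      · obtain ⟨a, ha, hxa⟩ := List.mem_flatMap.mp h
        exact phi_pos (hpos a ha) hxa

/-- For all `n ≥ 0`, the word `W n` is a Lyndon word. -/
theorem zww_isLyndon : ∀ n : ℕ, IsLyndon (W n) := by
  intro n
  obtain ⟨t, ht, hpos⟩ := W_structure n
  constructor
  · rw [ht]; simp
  · intro u v hu hv hx
    rw [ht] at hx ⊢
    obtain ⟨a, u', rfl⟩ := List.exists_cons_of_ne_nil hu
    obtain ⟨b, v', rfl⟩ := List.exists_cons_of_ne_nil hv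
    simp only [List.cons_append, List.cons.injEq] at hx
    obtain ⟨ha, hteq⟩ := hx
    have hb : b ∈ t := by rw [hteq]; simp
    exact List.Lex.rel (hpos b hb)
end
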